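/- Let G be a graph with Ricci curvature at least κ > 0 equipped with a random walk m with averaging operator M. Then for every 1-Lipschitz function f, every λ > 0, and every i ≥ 1, M^i(e^{λf}) ≤ exp(λ·M^i f + (1/2)·λ²·e^{2λ}·Σ_{j=0}^{i-1} (1-κ)^{2j}) pointwise. -/

import Mathlib

open Finset

/-- A probability vector on a finite set. -/
def IsProbVec {V : Type*} [Fintype V] (m : V → ℝ) : Prop :=
  (∀ x, 0 ≤ m x) ∧ ∑ x, m x = 1

/-- A coupling between two probability vectors. -/
def IsCoupling {V : Type*} [Fintype V] (m₁ m₂ : V → ℝ) (A : V → V → ℝ) : Prop :=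
  (∀ x y, 0 ≤ A x y) ∧ (∀ x, ∑ y, A x y = m₁ x) ∧ (∀ y, ∑ x, A x y = m₂ y)

/-- The L¹-Wasserstein (transportation) distance between two probability vectors,
with respect to the graph metric. -/
noncomputable def Wdist {V : Type*} [Fintype V] (G : SimpleGraph V) (m₁ m₂ : V → ℝ) : ℝ :=
  sInf {s | ∃ A : V → V → ℝ, IsCoupling m₁ m₂ A ∧
    s = ∑ x, ∑ y, A x y * (G.dist x y : ℝ)}

/-- A random walk on a graph: at each vertex a probability measure supported on
the closed neighborhood. -/
def IsRandomWalk {V : Type*} [Fintype V] (G : SimpleGraph V) (m : V → V → ℝ) : Prop :=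
  ∀ x, IsProbVec (m x) ∧ ∀ y, m x y ≠ 0 → y = x ∨ G.Adj x y

/-- Ollivier's Ricci curvature `κ(x,y) = 1 - W(m_x, m_y)/d(x,y)`. -/
noncomputable def ricci {V : Type*} [Fintype V] (G : SimpleGraph V) (m : V → V → ℝ)
    (x y : V) : ℝ :=
  1 - Wdist G (m x) (m y) / (G.dist x y : ℝ)

/-- The averaging operator `(Mf)(x) = ∑_y f(y)·m_x(y)`. -/
def Mop {V : Type*} [Fintype V] (m : V → V → ℝ) (f : V → ℝ) : V → ℝ :=
  fun x => ∑ y, f y * m x y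

/-- Elementary quadratic exponential bound. -/
lemma exp_le_quad (t : ℝ) : Real.exp t ≤ 1 + t + t ^ 2 / 2 * Real.exp |t| := by
  have key1 : ∀ u : ℝ, (1 - u) * Real.exp u ≤ 1 := by
    intro u
    have h := Real.add_one_le_exp (-u)
    rw [Real.exp_neg] at h
    have hp := Real.exp_pos u
    rw [inv_eq_one_div, le_div_iff₀ hp] at h
    linarith
  rcases le_total t 0 with ht | ht
  · have key : Real.exp t ≤ 1 + t + t ^ 2 / 2 := by
      have hG : ∀ u : ℝ, HasDerivAt (fun u : ℝ => 1 + u + u ^ 2 / 2 - Real.exp u)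
          (1 + u - Real.exp u) u := by
        intro u
        have h1 : HasDerivAt (fun u : ℝ => 1 + u) 1 u := by
          simpa using (hasDerivAt_id u).const_add (1 : ℝ)
        have h2 : HasDerivAt (fun u : ℝ => u ^ 2 / 2) u u := by
          have := (hasDerivAt_pow 2 u).div_const 2
          simpa using this
        exact (h1.add h2).sub (Real.hasDerivAt_exp u)
      have hanti : AntitoneOn (fun u : ℝ => 1 + u + u ^ 2 / 2 - Real.exp u) (Set.Iic 0) := by
        apply antitoneOn_of_deriv_nonpos (convex_Iic 0)
        · exact (Continuous.continuousOn (by continuity))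
        · intro u _
          exact (hG u).differentiableAt.differentiableWithinAt
        · intro u hu
          rw [(hG u).deriv]
          have := Real.add_one_le_exp u
          linarith
      have h0 : (fun u : ℝ => 1 + u + u ^ 2 / 2 - Real.exp u) 0
          ≤ (fun u : ℝ => 1 + u + u ^ 2 / 2 - Real.exp u) t :=
        hanti ht (Set.mem_Iic.2 le_rfl) ht
      simp only [Real.exp_zero] at h0
      norm_num at h0
      linarith
    have h1 : (1 : ℝ) ≤ Real.exp |t| := Real.one_le_exp (abs_nonneg t)
    nlinarith [sq_nonneg t]
  · have key : ∀ s : ℝ, 0 ≤ s → Real.exp s ≤ 1 + s + s ^ 2 / 2 * Real.exp s := by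
      intro s hs
      have hF : ∀ u : ℝ, HasDerivAt (fun u : ℝ => 1 + u + u ^ 2 / 2 * Real.exp u - Real.exp u)
          (1 + (u * Real.exp u + u ^ 2 / 2 * Real.exp u) - Real.exp u) u := by
        intro u
        have h1 : HasDerivAt (fun u : ℝ => 1 + u) 1 u := by
          simpa using (hasDerivAt_id u).const_add (1 : ℝ)
        have h2 : HasDerivAt (fun u : ℝ => u ^ 2 / 2) u u := by
          have := (hasDerivAt_pow 2 u).div_const 2
          simpa using this
        have h3 : HasDerivAt (fun u : ℝ => u ^ 2 / 2 * Real.exp u)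
            (u * Real.exp u + u ^ 2 / 2 * Real.exp u) u := by
          have := h2.mul (Real.hasDerivAt_exp u)
          exact this
        exact (h1.add h3).sub (Real.hasDerivAt_exp u)
      have hmono : MonotoneOn (fun u : ℝ => 1 + u + u ^ 2 / 2 * Real.exp u - Real.exp u)
          (Set.Ici 0) := by
        apply monotoneOn_of_deriv_nonneg (convex_Ici 0)
        · exact (Continuous.continuousOn (by continuity))
        · intro u _
          exact (hF u).differentiableAt.differentiableWithinAt
        · intro u _
          rw [(hF u).deriv]
          have h4 := key1 u
          nlinarith [sq_nonneg u, (Real.exp_pos u).le]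
      have h0 : (fun u : ℝ => 1 + u + u ^ 2 / 2 * Real.exp u - Real.exp u) 0
          ≤ (fun u : ℝ => 1 + u + u ^ 2 / 2 * Real.exp u - Real.exp u) s :=
        hmono (Set.mem_Ici.2 le_rfl) hs hs
      simp only [Real.exp_zero] at h0
      norm_num at h0
      linarith
    rw [abs_of_nonneg ht]
    exact key t ht
/-- One-step exponential moment bound. -/
lemma onestep {V : Type*} [Fintype V] (G : SimpleGraph V) (m : V → V → ℝ)
    (hm : IsRandomWalk G m) (φ : V → ℝ) (α : ℝ) (hα0 : 0 ≤ α) (hα1 : α ≤ 1)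
    (hφ : ∀ x y : V, |φ x - φ y| ≤ α * (G.dist x y : ℝ))
    (l : ℝ) (hl : 0 < l) (x : V) :
    Mop m (fun y => Real.exp (l * φ y)) x ≤
      Real.exp (l * Mop m φ x + 1 / 2 * l ^ 2 * Real.exp (2 * l) * α ^ 2) := by
  obtain ⟨⟨hnn, hsum⟩, hsupp⟩ := hm x
  set μ := Mop m φ x with hμ
  have hstep : ∀ y : V, m x y ≠ 0 → |φ y - φ x| ≤ α := by
    intro y hy
    rcases hsupp y hy with rfl | hadj
    · simpa using hα0
    · have hd : G.dist y x = 1 := SimpleGraph.dist_eq_one_iff_adj.2 hadj.symm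
      have h2 := hφ y x
      rw [hd] at h2
      simpa using h2
  have hmean : ∑ y, m x y * (φ y - φ x) = μ - φ x := by
    have h1 : ∑ y, m x y * (φ y - φ x)
        = (∑ y, φ y * m x y) - φ x * ∑ y, m x y := by
      rw [Finset.mul_sum, ← Finset.sum_sub_distrib]
      exact Finset.sum_congr rfl (fun y _ => by ring)
    rw [h1, hsum, hμ]
    simp [Mop]
  have hμx : |μ - φ x| ≤ α := by
    rw [← hmean]
    calc |∑ y, m x y * (φ y - φ x)| ≤ ∑ y, |m x y * (φ y - φ x)| :=
          Finset.abs_sum_le_sum_abs _ _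
      _ ≤ ∑ y, m x y * α := by
          refine Finset.sum_le_sum fun y _ => ?_
          by_cases h : m x y = 0
          · simp [h, mul_nonneg, hα0]
          · rw [abs_mul, abs_of_nonneg (hnn y)]
            exact mul_le_mul_of_nonneg_left (hstep y h) (hnn y)
      _ = α := by rw [← Finset.sum_mul, hsum, one_mul]
  have hvar : ∑ y, m x y * (φ y - μ) ^ 2 ≤ α ^ 2 := by
    have hexp : ∑ y, m x y * (φ y - μ) ^ 2
        = (∑ y, m x y * (φ y - φ x) ^ 2) - (μ - φ x) ^ 2 := by
      have hc : ∀ y ∈ Finset.univ, m x y * (φ y - μ) ^ 2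
          = m x y * (φ y - φ x) ^ 2 - (2 * (μ - φ x)) * (m x y * (φ y - φ x))
            + (μ - φ x) ^ 2 * m x y := fun y _ => by ring
      rw [Finset.sum_congr rfl hc, Finset.sum_add_distrib, Finset.sum_sub_distrib,
        ← Finset.mul_sum, ← Finset.mul_sum, hmean, hsum]
      ring
    have hbound : ∑ y, m x y * (φ y - φ x) ^ 2 ≤ α ^ 2 := by
      calc ∑ y, m x y * (φ y - φ x) ^ 2 ≤ ∑ y, m x y * α ^ 2 := by
            refine Finset.sum_le_sum fun y _ => ?_
            by_cases h : m x y = 0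
            · simp [h]
            · refine mul_le_mul_of_nonneg_left ?_ (hnn y)
              have := abs_le.mp (hstep y h)
              exact sq_le_sq' (by linarith [this.1]) this.2
        _ = α ^ 2 := by rw [← Finset.sum_mul, hsum, one_mul]
    nlinarith [sq_nonneg (μ - φ x)]
  have hcenter : ∑ y, m x y * (l * (φ y - μ)) = 0 := by
    have h1 : ∑ y, m x y * (l * (φ y - μ)) = l * ∑ y, m x y * (φ y - μ) := by
      rw [Finset.mul_sum]; exact Finset.sum_congr rfl fun y _ => by ring
    have h2 : ∑ y, m x y * (φ y - μ) = (∑ y, φ y * m x y) - μ * ∑ y, m x y := by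
      rw [Finset.mul_sum, ← Finset.sum_sub_distrib]
      exact Finset.sum_congr rfl fun y _ => by ring
    rw [h1, h2, hsum, hμ]
    simp [Mop]
  have key : ∑ y, Real.exp (l * (φ y - μ)) * m x y
      ≤ 1 + 1 / 2 * l ^ 2 * Real.exp (2 * l) * α ^ 2 := by
    have hterm : ∀ y ∈ Finset.univ, Real.exp (l * (φ y - μ)) * m x y
        ≤ (1 + l * (φ y - μ)) * m x y
          + Real.exp (2 * l) / 2 * (m x y * (l * (φ y - μ)) ^ 2) := by
      intro y _
      by_cases h : m x y = 0
      · simp [h]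
      have habs : |l * (φ y - μ)| ≤ 2 * l := by
        rw [abs_mul, abs_of_pos hl]
        have h1 : |φ y - μ| ≤ 2 := by
          calc |φ y - μ| ≤ |φ y - φ x| + |φ x - μ| := abs_sub_le _ _ _
            _ ≤ α + α := by
                have := hstep y h
                have h2 := hμx
                rw [abs_sub_comm] at h2
                linarith
            _ ≤ 2 := by linarith
        nlinarith
      have hq := exp_le_quad (l * (φ y - μ))
      have hexpabs : Real.exp |l * (φ y - μ)| ≤ Real.exp (2 * l) := Real.exp_le_exp.2 habs
      have h2 : Real.exp (l * (φ y - μ))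
          ≤ 1 + l * (φ y - μ) + (l * (φ y - μ)) ^ 2 / 2 * Real.exp (2 * l) := by
        refine hq.trans ?_
        have := mul_le_mul_of_nonneg_left hexpabs
          (by positivity : (0:ℝ) ≤ (l * (φ y - μ)) ^ 2 / 2)
        linarith
      calc Real.exp (l * (φ y - μ)) * m x y
          ≤ (1 + l * (φ y - μ) + (l * (φ y - μ)) ^ 2 / 2 * Real.exp (2 * l)) * m x y :=
            mul_le_mul_of_nonneg_right h2 (hnn y)
        _ = (1 + l * (φ y - μ)) * m x y
            + Real.exp (2 * l) / 2 * (m x y * (l * (φ y - μ)) ^ 2) := by ring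
    have hsq : ∑ y, m x y * (l * (φ y - μ)) ^ 2 ≤ l ^ 2 * α ^ 2 := by
      have h1 : ∑ y, m x y * (l * (φ y - μ)) ^ 2 = l ^ 2 * ∑ y, m x y * (φ y - μ) ^ 2 := by
        rw [Finset.mul_sum]; exact Finset.sum_congr rfl fun y _ => by ring
      rw [h1]
      exact mul_le_mul_of_nonneg_left hvar (sq_nonneg l)
    calc ∑ y, Real.exp (l * (φ y - μ)) * m x y
        ≤ ∑ y, ((1 + l * (φ y - μ)) * m x y
            + Real.exp (2 * l) / 2 * (m x y * (l * (φ y - μ)) ^ 2)) :=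
          Finset.sum_le_sum hterm
      _ = (∑ y, m x y) + (∑ y, m x y * (l * (φ y - μ)))
          + Real.exp (2 * l) / 2 * ∑ y, m x y * (l * (φ y - μ)) ^ 2 := by
          rw [Finset.sum_add_distrib, ← Finset.mul_sum]
          congr 1
          rw [← Finset.sum_add_distrib]
          exact Finset.sum_congr rfl fun y _ => by ring
      _ ≤ 1 + 0 + Real.exp (2 * l) / 2 * (l ^ 2 * α ^ 2) := by
          rw [hsum, hcenter]
          have := mul_le_mul_of_nonneg_left hsq (by positivity : (0:ℝ) ≤ Real.exp (2 * l) / 2)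
          linarith
      _ = 1 + 1 / 2 * l ^ 2 * Real.exp (2 * l) * α ^ 2 := by ring
  have hsplit : Mop m (fun y => Real.exp (l * φ y)) x
      = Real.exp (l * μ) * ∑ y, Real.exp (l * (φ y - μ)) * m x y := by
    simp only [Mop, Finset.mul_sum]
    refine Finset.sum_congr rfl fun y _ => ?_
    have h : Real.exp (l * μ) * Real.exp (l * (φ y - μ)) = Real.exp (l * φ y) := by
      rw [← Real.exp_add]; congr 1; ring
    rw [← h]; ring
  rw [hsplit]
  have hK : (0:ℝ) ≤ 1 / 2 * l ^ 2 * Real.exp (2 * l) * α ^ 2 := by positivity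
  calc Real.exp (l * μ) * ∑ y, Real.exp (l * (φ y - μ)) * m x y
      ≤ Real.exp (l * μ) * (1 + 1 / 2 * l ^ 2 * Real.exp (2 * l) * α ^ 2) :=
        mul_le_mul_of_nonneg_left key (Real.exp_pos _).le
    _ ≤ Real.exp (l * μ) * Real.exp (1 / 2 * l ^ 2 * Real.exp (2 * l) * α ^ 2) := by
        refine mul_le_mul_of_nonneg_left ?_ (Real.exp_pos _).le
        linarith [Real.add_one_le_exp (1 / 2 * l ^ 2 * Real.exp (2 * l) * α ^ 2)]
    _ = Real.exp (l * μ + 1 / 2 * l ^ 2 * Real.exp (2 * l) * α ^ 2) := by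
        rw [← Real.exp_add]
/-- Duality lower bound: averaged differences are controlled by the Wasserstein distance. -/
lemma wdist_bound {V : Type*} [Fintype V] (G : SimpleGraph V) (m : V → V → ℝ)
    (hm : IsRandomWalk G m) (φ : V → ℝ) (α : ℝ) (hα0 : 0 ≤ α)
    (hφ : ∀ x y : V, |φ x - φ y| ≤ α * (G.dist x y : ℝ)) (x y : V) :
    Mop m φ x - Mop m φ y ≤ α * Wdist G (m x) (m y) := by
  set S : Set ℝ := {s | ∃ A : V → V → ℝ, IsCoupling (m x) (m y) A ∧
    s = ∑ u, ∑ v, A u v * (G.dist u v : ℝ)} with hS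
  have hWS : Wdist G (m x) (m y) = sInf S := rfl
  have hprod : IsCoupling (m x) (m y) (fun u v => m x u * m y v) := by
    refine ⟨fun u v => mul_nonneg ((hm x).1.1 u) ((hm y).1.1 v), fun u => ?_, fun v => ?_⟩
    · rw [← Finset.mul_sum, (hm y).1.2, mul_one]
    · rw [← Finset.sum_mul, (hm x).1.2, one_mul]
  have hne : S.Nonempty := ⟨_, ⟨fun u v => m x u * m y v, hprod, rfl⟩⟩
  have hlb : ∀ s ∈ S, Mop m φ x - Mop m φ y ≤ α * s := by
    rintro s ⟨A, ⟨hA0, hA1, hA2⟩, rfl⟩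
    have h1 : Mop m φ x = ∑ u, ∑ v, A u v * φ u := by
      simp only [Mop]
      refine Finset.sum_congr rfl fun u _ => ?_
      rw [← Finset.sum_mul, hA1 u]; ring
    have h2 : Mop m φ y = ∑ u, ∑ v, A u v * φ v := by
      simp only [Mop]
      rw [Finset.sum_comm]
      refine Finset.sum_congr rfl fun v _ => ?_
      rw [← Finset.sum_mul, hA2 v]; ring
    rw [h1, h2, ← Finset.sum_sub_distrib, Finset.mul_sum]
    refine Finset.sum_le_sum fun u _ => ?_
    rw [← Finset.sum_sub_distrib, Finset.mul_sum]
    refine Finset.sum_le_sum fun v _ => ?_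
    have h3 : φ u - φ v ≤ α * (G.dist u v : ℝ) := le_trans (le_abs_self _) (hφ u v)
    calc A u v * φ u - A u v * φ v = A u v * (φ u - φ v) := by ring
      _ ≤ A u v * (α * (G.dist u v : ℝ)) := mul_le_mul_of_nonneg_left h3 (hA0 u v)
      _ = α * (A u v * (G.dist u v : ℝ)) := by ring
  rcases eq_or_lt_of_le hα0 with h0 | h0
  · obtain ⟨s, hs⟩ := hne
    have := hlb s hs
    rw [← h0] at this ⊢
    simpa using this
  · have hW : (Mop m φ x - Mop m φ y) / α ≤ sInf S := by
      apply le_csInf hne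
      intro s hs
      rw [div_le_iff₀ h0]
      have := hlb s hs
      linarith [hlb s hs]
    rw [hWS]
    calc Mop m φ x - Mop m φ y = α * ((Mop m φ x - Mop m φ y) / α) := by
          field_simp
      _ ≤ α * sInf S := mul_le_mul_of_nonneg_left hW h0.le
/-- Lipschitz contraction of the averaging operator under a Ricci lower bound. -/
lemma contraction {V : Type*} [Fintype V] (G : SimpleGraph V) (m : V → V → ℝ)
    (hm : IsRandomWalk G m) (κ : ℝ) (hκ : ∀ x y : V, x ≠ y → κ ≤ ricci G m x y)
    (φ : V → ℝ) (α : ℝ) (hα0 : 0 ≤ α)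
    (hφ : ∀ x y : V, |φ x - φ y| ≤ α * (G.dist x y : ℝ)) :
    ∀ x y : V, |Mop m φ x - Mop m φ y| ≤ α * (1 - κ) * (G.dist x y : ℝ) := by
  have oneside : ∀ x y : V, Mop m φ x - Mop m φ y ≤ α * (1 - κ) * (G.dist x y : ℝ) := by
    intro x y
    rcases eq_or_ne x y with rfl | hxy
    · simp [SimpleGraph.dist_self]
    by_cases hreach : G.Reachable x y
    · have hd : 0 < G.dist x y :=
        Nat.pos_of_ne_zero (fun h => hxy (hreach.dist_eq_zero_iff.mp h))
      have hdR : (0:ℝ) < (G.dist x y : ℝ) := by exact_mod_cast hd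
      have hric := hκ x y hxy
      rw [ricci] at hric
      have hdiv : Wdist G (m x) (m y) / (G.dist x y : ℝ) ≤ 1 - κ := by linarith
      have hWd : Wdist G (m x) (m y) ≤ (1 - κ) * (G.dist x y : ℝ) := by
        rw [div_le_iff₀ hdR] at hdiv
        linarith
      calc Mop m φ x - Mop m φ y ≤ α * Wdist G (m x) (m y) :=
            wdist_bound G m hm φ α hα0 hφ x y
        _ ≤ α * ((1 - κ) * (G.dist x y : ℝ)) := mul_le_mul_of_nonneg_left hWd hα0
        _ = α * (1 - κ) * (G.dist x y : ℝ) := by ring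
    · have hphi_eq : ∀ u v : V, ¬ G.Reachable u v → φ u = φ v := by
        intro u v huv
        have h := hφ u v
        rw [SimpleGraph.dist_eq_zero_of_not_reachable huv] at h
        simp only [Nat.cast_zero, mul_zero] at h
        have := abs_nonneg (φ u - φ v)
        have h2 : |φ u - φ v| = 0 := le_antisymm h this
        rw [abs_eq_zero] at h2
        linarith
      have hMx : Mop m φ x = φ y := by
        simp only [Mop]
        have hc : ∀ u ∈ Finset.univ, φ u * m x u = φ y * m x u := by
          intro u _
          by_cases h : m x u = 0
          · simp [h]
          · have hr : G.Reachable x u := by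
              rcases (hm x).2 u h with rfl | hadj
              · exact SimpleGraph.Reachable.refl _
              · exact hadj.reachable
            have hnr : ¬ G.Reachable u y := fun hc2 => hreach (hr.trans hc2)
            rw [hphi_eq u y hnr]
        rw [Finset.sum_congr rfl hc, ← Finset.mul_sum, (hm x).1.2, mul_one]
      have hnreach' : ¬ G.Reachable y x := fun h => hreach h.symm
      have hMy : Mop m φ y = φ x := by
        simp only [Mop]
        have hc : ∀ u ∈ Finset.univ, φ u * m y u = φ x * m y u := by
          intro u _
          by_cases h : m y u = 0
          · simp [h]
          · have hr : G.Reachable y u := by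
              rcases (hm y).2 u h with rfl | hadj
              · exact SimpleGraph.Reachable.refl _
              · exact hadj.reachable
            have hnr : ¬ G.Reachable u x := fun hc2 => hnreach' (hr.trans hc2)
            rw [hphi_eq u x hnr]
        rw [Finset.sum_congr rfl hc, ← Finset.mul_sum, (hm y).1.2, mul_one]
      rw [hMx, hMy, hphi_eq x y hreach, SimpleGraph.dist_eq_zero_of_not_reachable hreach]
      simp
  intro x y
  rw [abs_sub_le_iff]
  refine ⟨oneside x y, ?_⟩
  have := oneside y x
  rwa [SimpleGraph.dist_comm] at this
/-- Iterated Lipschitz contraction. -/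
lemma iter_lip {V : Type*} [Fintype V] (G : SimpleGraph V) (m : V → V → ℝ)
    (hm : IsRandomWalk G m) (κ : ℝ) (hκ1 : κ ≤ 1)
    (hκ : ∀ x y : V, x ≠ y → κ ≤ ricci G m x y)
    (f : V → ℝ) (hf : ∀ x y : V, |f x - f y| ≤ (G.dist x y : ℝ)) :
    ∀ i : ℕ, ∀ x y : V,
      |(Mop m)^[i] f x - (Mop m)^[i] f y| ≤ (1 - κ) ^ i * (G.dist x y : ℝ) := by
  intro i
  induction i with
  | zero => intro x y; simpa using hf x y
  | succ n ih =>
    intro x y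
    rw [Function.iterate_succ_apply']
    have h := contraction G m hm κ hκ ((Mop m)^[n] f) ((1 - κ) ^ n)
      (pow_nonneg (by linarith) n) ih x y
    calc |Mop m ((Mop m)^[n] f) x - Mop m ((Mop m)^[n] f) y|
        ≤ (1 - κ) ^ n * (1 - κ) * (G.dist x y : ℝ) := h
      _ = (1 - κ) ^ (n + 1) * (G.dist x y : ℝ) := by rw [← pow_succ]
/-- iterated exponential moment bound. If `G` has Ricci curvature
at least `κ > 0`, then for every 1-Lipschitz `f`, every `λ > 0` and every `i ≥ 1`,
`M^i(e^{λf}) ≤ exp(λ·M^i f + (1/2)λ²e^{2λ}·∑_{j<i}(1-κ)^{2j})` pointwise. -/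
theorem iterated_averaging_exp_bound {V : Type*} [Fintype V] (G : SimpleGraph V)
    (m : V → V → ℝ) (hm : IsRandomWalk G m)
    (κ : ℝ) (hκpos : 0 < κ) (hκ : ∀ x y : V, x ≠ y → κ ≤ ricci G m x y)
    (f : V → ℝ) (hf : ∀ x y : V, |f x - f y| ≤ (G.dist x y : ℝ))
    (l : ℝ) (hl : 0 < l) (i : ℕ) (hi : 1 ≤ i) :
    ∀ x : V, (Mop m)^[i] (fun y => Real.exp (l * f y)) x ≤
      Real.exp (l * (Mop m)^[i] f x +
        (1 / 2) * l ^ 2 * Real.exp (2 * l) * ∑ j ∈ Finset.range i, (1 - κ) ^ (2 * j)) := by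
  set κ' := min κ 1 with hκ'def
  have hκ'pos : 0 < κ' := lt_min hκpos one_pos
  have hκ'le1 : κ' ≤ 1 := min_le_right _ _
  have hκ'ric : ∀ x y : V, x ≠ y → κ' ≤ ricci G m x y :=
    fun x y h => (min_le_left _ _).trans (hκ x y h)
  have hlip := iter_lip G m hm κ' hκ'le1 hκ'ric f hf
  have main : ∀ n : ℕ, ∀ x : V, (Mop m)^[n] (fun y => Real.exp (l * f y)) x ≤
      Real.exp (l * (Mop m)^[n] f x +
        (1 / 2) * l ^ 2 * Real.exp (2 * l) * ∑ j ∈ Finset.range n, (1 - κ') ^ (2 * j)) := by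
    intro n
    induction n with
    | zero => intro x; simp
    | succ n ih =>
      intro x
      set c : ℝ := (1 / 2) * l ^ 2 * Real.exp (2 * l) with hc
      set Sn : ℝ := ∑ j ∈ Finset.range n, (1 - κ') ^ (2 * j) with hSn
      have hpow0 : (0:ℝ) ≤ (1 - κ') ^ n := pow_nonneg (by linarith) n
      have hpow1 : (1 - κ') ^ n ≤ 1 := pow_le_one₀ (by linarith) (by linarith)
      rw [Function.iterate_succ_apply']
      have hmono : Mop m ((Mop m)^[n] (fun y => Real.exp (l * f y))) x
          ≤ Mop m (fun y => Real.exp (l * (Mop m)^[n] f y + c * Sn)) x := by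
        simp only [Mop]
        exact Finset.sum_le_sum fun y _ =>
          mul_le_mul_of_nonneg_right (ih y) ((hm x).1.1 y)
      have hfactor : Mop m (fun y => Real.exp (l * (Mop m)^[n] f y + c * Sn)) x
          = Real.exp (c * Sn) * Mop m (fun y => Real.exp (l * (Mop m)^[n] f y)) x := by
        simp only [Mop, Finset.mul_sum]
        refine Finset.sum_congr rfl fun y _ => ?_
        rw [Real.exp_add]; ring
      have hone := onestep G m hm ((Mop m)^[n] f) ((1 - κ') ^ n) hpow0 hpow1
        (hlip n) l hl x
      calc Mop m ((Mop m)^[n] (fun y => Real.exp (l * f y))) x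
          ≤ Real.exp (c * Sn) * Mop m (fun y => Real.exp (l * (Mop m)^[n] f y)) x := by
            rw [← hfactor]; exact hmono
        _ ≤ Real.exp (c * Sn) *
            Real.exp (l * Mop m ((Mop m)^[n] f) x + c * ((1 - κ') ^ n) ^ 2) := by
            refine mul_le_mul_of_nonneg_left ?_ (Real.exp_pos _).le
            simpa [hc] using hone
        _ = Real.exp (l * (Mop m)^[n + 1] f x +
            c * ∑ j ∈ Finset.range (n + 1), (1 - κ') ^ (2 * j)) := by
            rw [← Real.exp_add, Function.iterate_succ_apply', Finset.sum_range_succ]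
            congr 1
            have hp : ((1 - κ') ^ n) ^ 2 = (1 - κ') ^ (2 * n) := by
              rw [← pow_mul, mul_comm]
            rw [hp]
            ring
  intro x
  refine (main i x).trans (Real.exp_le_exp.2 ?_)
  have hsum : ∑ j ∈ Finset.range i, (1 - κ') ^ (2 * j)
      ≤ ∑ j ∈ Finset.range i, (1 - κ) ^ (2 * j) := by
    refine Finset.sum_le_sum fun j _ => ?_
    rw [pow_mul, pow_mul]
    refine pow_le_pow_left₀ (sq_nonneg _) ?_ j
    rcases le_total κ 1 with h | h
    · rw [hκ'def, min_eq_left h]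
    · rw [hκ'def, min_eq_right h]
      nlinarith
  have hcpos : (0:ℝ) ≤ (1 / 2) * l ^ 2 * Real.exp (2 * l) := by positivity
  have := mul_le_mul_of_nonneg_left hsum hcpos
  linarith
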